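/- Let n, k, j be integers with 1 ≤ j ≤ k ≤ n, and let x₁, ..., xₙ be real numbers with x₁ + ... + xₙ = 0. For S ⊆ {1,...,n}, write b_S = ∑_{i∈S} xᵢ. Then for every j-element subset S of {1,...,n}: ∑_{T ⊆ {1,...,n}, |T| = k, S ⊆ T} b_T = C(n-j-1, k-j) · b_S. -/

import Mathlib

open Finset

lemma card_filter_mem_powersetCard (U : Finset ℕ) (m : ℕ) (i : ℕ) (hi : i ∈ U) (hm : 1 ≤ m) :
    ((U.powersetCard m).filter (fun W => i ∈ W)).card = (U.card - 1).choose (m - 1) := by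
  have hc := Finset.card_powersetCard (m - 1) (U.erase i)
  rw [Finset.card_erase_of_mem hi] at hc
  rw [← hc]
  apply Finset.card_bij (fun W _ => W.erase i)
  · intro W hW
    simp only [mem_filter, mem_powersetCard] at hW
    simp only [mem_powersetCard]
    exact ⟨Finset.erase_subset_erase _ hW.1.1, by rw [Finset.card_erase_of_mem hW.2, hW.1.2]⟩
  · intro W₁ hW₁ W₂ hW₂ h
    simp only [mem_filter] at hW₁ hW₂
    rw [← Finset.insert_erase hW₁.2, ← Finset.insert_erase hW₂.2, h]
  · intro W hW
    simp only [mem_powersetCard] at hW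
    refine ⟨insert i W, ?_, ?_⟩
    · simp only [mem_filter, mem_powersetCard]
      have hni : i ∉ W := fun h => (Finset.notMem_erase i U) (hW.1 h)
      refine ⟨⟨?_, ?_⟩, Finset.mem_insert_self i W⟩
      · exact Finset.insert_subset hi (hW.1.trans (Finset.erase_subset i U))
      · rw [Finset.card_insert_of_notMem hni, hW.2]
        omega
    · rw [Finset.erase_insert (fun h => (Finset.notMem_erase i U) (hW.1 h))]

lemma sum_powersetCard_sum (U : Finset ℕ) (m : ℕ) (hm : 1 ≤ m) (f : ℕ → ℝ) :
    ∑ W ∈ U.powersetCard m, ∑ i ∈ W, f i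
      = ((U.card - 1).choose (m - 1) : ℝ) * ∑ i ∈ U, f i := by
  have h1 : ∀ W ∈ U.powersetCard m, ∑ i ∈ W, f i = ∑ i ∈ U, if i ∈ W then f i else 0 := by
    intro W hW
    rw [Finset.sum_ite_mem, Finset.inter_comm,
      Finset.inter_eq_left.2 (Finset.mem_powersetCard.1 hW).1]
  rw [Finset.sum_congr rfl h1, Finset.sum_comm, Finset.mul_sum]
  apply Finset.sum_congr rfl
  intro i hi
  rw [← Finset.sum_filter, Finset.sum_const,
    card_filter_mem_powersetCard U m i hi hm, nsmul_eq_mul]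

theorem sum_over_supersets (n k j : ℕ) (hj : 1 ≤ j) (hjk : j ≤ k) (hkn : k ≤ n)
    (x : ℕ → ℝ)
    (hsum : ∑ i ∈ Finset.Icc 1 n, x i = 0)
    (S : Finset ℕ) (hS : S ∈ (Finset.Icc 1 n).powersetCard j) :
    ∑ T ∈ ((Finset.Icc 1 n).powersetCard k).filter (fun T => S ⊆ T),
        (∑ i ∈ T, x i) =
      ((n - j - 1).choose (k - j) : ℝ) * ∑ i ∈ S, x i := by
  rw [Finset.mem_powersetCard] at hS
  obtain ⟨hSA, hScard⟩ := hS
  set A := Finset.Icc 1 n with hA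
  have hAcard : A.card = n := by simp [hA]
  set U := A \ S with hU
  have hUcard : U.card = n - j := by
    rw [hU, Finset.card_sdiff_of_subset hSA, hAcard, hScard]
  have hUS : ∑ i ∈ U, x i = -∑ i ∈ S, x i := by
    have := Finset.sum_sdiff_eq_sub (f := x) hSA
    rw [hU, this, hsum]; ring
  -- reindex
  have hre : ∑ T ∈ (A.powersetCard k).filter (fun T => S ⊆ T), ∑ i ∈ T, x i
      = ∑ W ∈ U.powersetCard (k - j), (∑ i ∈ W, x i + ∑ i ∈ S, x i) := by
    apply Finset.sum_nbij' (fun T => T \ S) (fun W => W ∪ S)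
    · intro T hT
      simp only [mem_filter, mem_powersetCard] at hT ⊢
      constructor
      · exact Finset.sdiff_subset_sdiff hT.1.1 le_rfl
      · rw [Finset.card_sdiff_of_subset hT.2, hT.1.2, hScard]
    · intro W hW
      simp only [mem_filter, mem_powersetCard] at hW ⊢
      have hWU : W ⊆ U := hW.1
      have hdisj : Disjoint W S := by
        apply Finset.disjoint_left.2
        intro a ha haS
        exact (Finset.mem_sdiff.1 (hWU ha)).2 haS
      refine ⟨⟨Finset.union_subset (hWU.trans (Finset.sdiff_subset)) hSA, ?_⟩,
        Finset.subset_union_right⟩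
      rw [Finset.card_union_of_disjoint hdisj, hW.2, hScard]
      omega
    · intro T hT
      simp only [mem_filter, mem_powersetCard] at hT
      exact Finset.sdiff_union_of_subset hT.2
    · intro W hW
      simp only [mem_powersetCard] at hW
      have hdisj : Disjoint W S := by
        apply Finset.disjoint_left.2
        intro a ha haS
        exact (Finset.mem_sdiff.1 (hW.1 ha)).2 haS
      rw [Finset.union_sdiff_right, Finset.sdiff_eq_self_of_disjoint hdisj]
    · intro T hT
      simp only [mem_filter, mem_powersetCard] at hT
      have := Finset.sum_sdiff_eq_sub (f := x) hT.2
      rw [this]; ring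
  rw [hre, Finset.sum_add_distrib, Finset.sum_const, Finset.card_powersetCard, hUcard,
    nsmul_eq_mul]
  rcases Nat.eq_or_lt_of_le hjk with heq | hlt
  · subst heq
    simp only [Nat.sub_self, Finset.powersetCard_zero]
    simp
  · -- j < k
    rw [sum_powersetCard_sum U (k - j) (by omega) x, hUcard, hUS]
    have hnj : j < n := lt_of_lt_of_le hlt hkn
    have hP : (n - j).choose (k - j)
        = (n - j - 1).choose (k - j - 1) + (n - j - 1).choose (k - j) := by
      have h1 : n - j = (n - j - 1) + 1 := by omega
      have h2 : k - j = (k - j - 1) + 1 := by omega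
      rw [h1, h2, Nat.choose_succ_succ]
      simp only [Nat.add_sub_cancel]
    rw [hP]
    push_cast
    ring
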